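/- arXiv:2501.09286 — 2 statements merged into one kernel-verified Lean document; each statement's English description precedes it below -/
import Mathlib

section
/- Let n be a natural number and let g be a permutation of a finite set with n elements. Then s(g) = n - c(g); that is, the least number of transpositions whose product equals g is exactly n minus the number of orbits of g. -/
open Equiv Equiv.Perm

section Aux
variable {α : Type*} [Fintype α] [DecidableEq α]

/-- Orbit count as `Nat.card` of the `SameCycle` quotient. -/
noncomputable abbrev Qc (g : Equiv.Perm α) : Type _ := Quotient (SameCycle.setoid g)

lemma sameCycle_closure {k : Equiv.Perm α} (P : α → Prop) (hP : ∀ c, P c → P (k c))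
    {a b : α} (hab : k.SameCycle a b) (ha : P a) : P b := by
  obtain ⟨i, -, rfl⟩ := hab.exists_pow_eq'
  clear hab
  induction i with
  | zero => simpa using ha
  | succ j ih =>
    rw [pow_succ']
    simpa using hP _ ih

set_option linter.unusedSectionVars false


lemma step_eq {x y : α} (h : Equiv.Perm α) {c : α} (h1 : h c ≠ x) (h2 : h c ≠ y) :
    (swap x y * h) c = h c := by
  simp [Equiv.Perm.mul_apply, swap_apply_of_ne_of_ne h1 h2]

lemma sc_apply (k : Equiv.Perm α) (c : α) : k.SameCycle c (k c) := ⟨1, by simp⟩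

lemma aux_xy {x y : α} (h : Equiv.Perm α) (hxy : ¬ h.SameCycle x y) :
    (swap x y * h).SameCycle x y := by
  set k := swap x y * h with hk
  have key : ∀ j : ℕ, k.SameCycle x ((h ^ j) x) := by
    intro j
    induction j with
    | zero => simpa using Equiv.Perm.SameCycle.refl k x
    | succ j ih =>
      set c := (h ^ j) x with hc
      have hxc : h.SameCycle x c := ⟨j, rfl⟩
      have hstep : (h ^ (j + 1)) x = h c := by rw [pow_succ']; simp [Equiv.Perm.mul_apply]; rfl
      rw [hstep]
      by_cases h1 : h c = x
      · rw [h1]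
      · by_cases h2 : h c = y
        · exact absurd (hxc.trans ⟨1, by simp [h2]⟩) hxy
        · exact ih.trans ((step_eq h h1 h2) ▸ sc_apply k c)
  have ho : 0 < orderOf h := orderOf_pos h
  have hcx : h ((h ^ (orderOf h - 1)) x) = x := by
    have h1 : h ^ orderOf h = 1 := pow_orderOf_eq_one h
    have : h ((h ^ (orderOf h - 1)) x) = (h ^ (orderOf h - 1 + 1)) x := by
      rw [pow_succ']; simp [Equiv.Perm.mul_apply]
    rw [this, Nat.sub_add_cancel ho, h1]; simp
  have h1 : k.SameCycle x ((h ^ (orderOf h - 1)) x) := key _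
  have h2 : k ((h ^ (orderOf h - 1)) x) = y := by
    rw [hk]; simp [Equiv.Perm.mul_apply, hcx]
  exact h1.trans (h2 ▸ sc_apply k _)

lemma claimC {x y : α} {h : Equiv.Perm α} {a b : α} (hxa : ¬ h.SameCycle x a)
    (hab : h.SameCycle a b) : (swap x y * h).SameCycle a b := by
  set k := swap x y * h with hk
  obtain ⟨i, -, rfl⟩ := hab.exists_pow_eq'
  clear hab
  induction i with
  | zero => simpa using Equiv.Perm.SameCycle.refl k a
  | succ j ih =>
    set c := (h ^ j) a with hc
    have hac : h.SameCycle a c := ⟨j, rfl⟩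
    have hstep : (h ^ (j + 1)) a = h c := by rw [pow_succ']; simp [Equiv.Perm.mul_apply]; rfl
    rw [hstep]
    by_cases h1 : h c = x
    · exact absurd (hac.trans ⟨1, by simp [h1]⟩).symm hxa
    · by_cases h2 : h c = y
      · have hxy : ¬ h.SameCycle x y := fun hxy =>
          hxa ((hxy.trans (h2 ▸ (sc_apply h c).symm)).trans hac.symm)
        have hkc : k c = x := by rw [hk]; simp [Equiv.Perm.mul_apply, h2]
        rw [h2]
        exact (ih.trans (hkc ▸ sc_apply k c)).trans (aux_xy h hxy)
      · exact ih.trans ((step_eq h h1 h2) ▸ sc_apply k c)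

lemma claimD {x y : α} {h : Equiv.Perm α} {a b : α} (hxa : ¬ h.SameCycle x a)
    (hxb : ¬ h.SameCycle x b) (hab : (swap x y * h).SameCycle a b) : h.SameCycle a b := by
  set k := swap x y * h with hk
  have main : ∀ c, (h.SameCycle a c ∨ (h.SameCycle a y ∧ h.SameCycle x c)) →
      (h.SameCycle a (k c) ∨ (h.SameCycle a y ∧ h.SameCycle x (k c))) := by
    intro c hc
    by_cases h1 : h c = x
    · have hxc : h.SameCycle a y ∧ h.SameCycle x c := by
        rcases hc with hc | hc
        · exact absurd ((hc.trans (h1 ▸ sc_apply h c))).symm hxa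
        · exact hc
      have : k c = y := by rw [hk]; simp [Equiv.Perm.mul_apply, h1]
      rw [this]
      exact Or.inl hxc.1
    · by_cases h2 : h c = y
      · have hay : h.SameCycle a y := by
          rcases hc with hc | hc
          · exact hc.trans (h2 ▸ sc_apply h c)
          · exact hc.1
        have : k c = x := by rw [hk]; simp [Equiv.Perm.mul_apply, h2]
        rw [this]
        exact Or.inr ⟨hay, Equiv.Perm.SameCycle.refl h x⟩
      · rw [step_eq h h1 h2]
        rcases hc with hc | hc
        · exact Or.inl (hc.trans (sc_apply h c))
        · exact Or.inr ⟨hc.1, hc.2.trans (sc_apply h c)⟩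
  have := sameCycle_closure _ main hab (Or.inl (Equiv.Perm.SameCycle.refl h a))
  rcases this with hc | hc
  · exact hc
  · exact absurd hc.2 hxb

lemma L1 {x y : α} (h : Equiv.Perm α) : Nat.card (Qc h) ≤ Nat.card (Qc (swap x y * h)) + 1 := by
  set k := swap x y * h with hk
  let f : Qc h → Option (Qc k) := Quotient.lift
    (fun a => if h.SameCycle x a then none else some (Quotient.mk (SameCycle.setoid k) a))
    (by
      intro a b hab
      show (if h.SameCycle x a then none else some (Quotient.mk (SameCycle.setoid k) a)) =
        (if h.SameCycle x b then none else some (Quotient.mk (SameCycle.setoid k) b))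
      by_cases hxa : h.SameCycle x a
      · rw [if_pos hxa, if_pos (hxa.trans hab)]
      · rw [if_neg hxa, if_neg (fun hxb => hxa (hxb.trans (Equiv.Perm.SameCycle.symm hab)))]
        exact congrArg some (Quotient.sound (claimC hxa hab)))
  have hinj : Function.Injective f := by
    rintro ⟨a⟩ ⟨b⟩ hfab
    have hfab' : (if h.SameCycle x a then none else some (Quotient.mk (SameCycle.setoid k) a)) =
        (if h.SameCycle x b then none else some (Quotient.mk (SameCycle.setoid k) b)) := hfab
    by_cases hxa : h.SameCycle x a <;> by_cases hxb : h.SameCycle x b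
    · exact Quotient.sound (hxa.symm.trans hxb)
    · rw [if_pos hxa, if_neg hxb] at hfab'; exact absurd hfab' (by simp)
    · rw [if_neg hxa, if_pos hxb] at hfab'; exact absurd hfab' (by simp)
    · rw [if_neg hxa, if_neg hxb, Option.some_inj] at hfab'
      exact Quotient.sound (claimD hxa hxb (Quotient.exact hfab'))
  haveI : Fintype (Qc k) := Fintype.ofFinite _
  haveI : Finite (Option (Qc k)) := Finite.of_fintype _
  calc Nat.card (Qc h) ≤ Nat.card (Option (Qc k)) := Nat.card_le_card_of_injective f hinj
    _ = Nat.card (Qc k) + 1 := Finite.card_option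

lemma L2 {g : Equiv.Perm α} {x : α} (hx : g x ≠ x) :
    Nat.card (Qc (swap x (g x) * g)) = Nat.card (Qc g) + 1 := by
  set y := g x with hy
  set k := swap x y * g with hk
  have hxy : x ≠ y := fun e => hx e.symm
  -- k fixes x
  have hkx : k x = x := by rw [hk]; simp [Equiv.Perm.mul_apply, ← hy]
  have hfix : ∀ a, k.SameCycle x a → a = x :=
    fun a ha => (ha.eq_of_left hkx).symm
  -- the g-class of x is closed under k
  have hclos : ∀ b, k.SameCycle y b → g.SameCycle x b := by
    intro b hb
    refine sameCycle_closure (k := k) (fun z => g.SameCycle x z) ?_ hb ⟨1, by simp; rfl⟩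
    intro c hc
    have hgc : g.SameCycle x (g c) := hc.trans (sc_apply g c)
    by_cases h1 : g c = x
    · have : k c = y := by rw [hk]; simp [Equiv.Perm.mul_apply, h1]
      rw [this]; exact ⟨1, by simp; rfl⟩
    · by_cases h2 : g c = y
      · have : k c = x := by rw [hk]; simp [Equiv.Perm.mul_apply, h2]
        rw [this]
      · rw [step_eq g h1 h2]; exact hgc
  -- injective map Option (Qc g) → Qc k
  refine le_antisymm ?_ ?_
  · have h1 : swap x y * k = g := by rw [hk, ← mul_assoc, swap_mul_self, one_mul]
    have := L1 (x := x) (y := y) k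
    rwa [h1] at this
  · let φ : Option (Qc g) → Qc k := fun o => o.elim (Quotient.mk (SameCycle.setoid k) x)
      (Quotient.lift (fun a => if g.SameCycle x a then Quotient.mk (SameCycle.setoid k) y
          else Quotient.mk (SameCycle.setoid k) a)
        (by
          intro a b hab
          show (if g.SameCycle x a then Quotient.mk (SameCycle.setoid k) y
              else Quotient.mk (SameCycle.setoid k) a) =
            (if g.SameCycle x b then Quotient.mk (SameCycle.setoid k) y
              else Quotient.mk (SameCycle.setoid k) b)
          by_cases hxa : g.SameCycle x a
          · rw [if_pos hxa, if_pos (hxa.trans hab)]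
          · rw [if_neg hxa, if_neg (fun hxb => hxa (hxb.trans (Equiv.Perm.SameCycle.symm hab)))]
            exact Quotient.sound (claimC hxa hab)))
    have hinj : Function.Injective φ := by
      have key : ∀ a : α, φ (some (Quotient.mk (SameCycle.setoid g) a)) =
          (if g.SameCycle x a then Quotient.mk (SameCycle.setoid k) y
            else Quotient.mk (SameCycle.setoid k) a) := fun a => rfl
      rintro (_ | ⟨a⟩) (_ | ⟨b⟩) hab
      · rfl
      · exfalso
        induction b using Quotient.ind with
        | _ b =>
          rw [key b] at hab
          by_cases hxb : g.SameCycle x b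
          · rw [if_pos hxb] at hab
            have : y = x := hfix y (Quotient.exact hab)
            exact hxy this.symm
          · rw [if_neg hxb] at hab
            exact hxb ((hfix b (Quotient.exact hab)) ▸ Equiv.Perm.SameCycle.refl g x)
      · exfalso
        induction a using Quotient.ind with
        | _ a =>
          rw [key a] at hab
          by_cases hxa : g.SameCycle x a
          · rw [if_pos hxa] at hab
            have : y = x := hfix y (Quotient.exact hab.symm)
            exact hxy this.symm
          · rw [if_neg hxa] at hab
            exact hxa ((hfix a (Quotient.exact hab.symm)) ▸ Equiv.Perm.SameCycle.refl g x)
      · induction a using Quotient.ind with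
        | _ a =>
        induction b using Quotient.ind with
        | _ b =>
          rw [key a, key b] at hab
          congr 1
          by_cases hxa : g.SameCycle x a <;> by_cases hxb : g.SameCycle x b
          · exact Quotient.sound (hxa.symm.trans hxb)
          · rw [if_pos hxa, if_neg hxb] at hab
            exact absurd (hclos b (Quotient.exact hab)) hxb
          · rw [if_neg hxa, if_pos hxb] at hab
            exact absurd (hclos a (Quotient.exact hab.symm)) hxa
          · rw [if_neg hxa, if_neg hxb] at hab
            exact Quotient.sound (claimD hxa hxb (Quotient.exact hab))
    haveI : Fintype (Qc k) := Fintype.ofFinite _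
    have := Nat.card_le_card_of_injective φ hinj
    rwa [Finite.card_option] at this

lemma Qc_one : Nat.card (Qc (1 : Equiv.Perm α)) = Fintype.card α := by
  rw [← Nat.card_eq_fintype_card]
  refine (Nat.card_eq_of_bijective (Quotient.mk (SameCycle.setoid (1 : Equiv.Perm α))) ?_).symm
  constructor
  · intro a b hab
    exact sameCycle_one.mp (Quotient.exact hab)
  · exact Quotient.mk_surjective

lemma Qc_le (g : Equiv.Perm α) : Nat.card (Qc g) ≤ Fintype.card α := by
  rw [← Nat.card_eq_fintype_card]
  exact Nat.card_le_card_of_surjective _ Quotient.mk_surjective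

lemma cycleCount_eq_Qc (g : Equiv.Perm α) :
    Nat.card (MulAction.orbitRel.Quotient (Subgroup.zpowers g) α) = Nat.card (Qc g) := by
  refine Nat.card_congr (Quotient.congrRight ?_)
  intro a b
  show a ∈ MulAction.orbit (Subgroup.zpowers g) b ↔ g.SameCycle a b
  constructor
  · rintro ⟨⟨u, hu⟩, rfl⟩
    obtain ⟨i, rfl⟩ := Subgroup.mem_zpowers_iff.mp hu
    exact (Equiv.Perm.SameCycle.symm ⟨i, rfl⟩)
  · rintro ⟨i, rfl⟩
    exact ⟨⟨g ^ (-i), Subgroup.mem_zpowers_iff.mpr ⟨-i, rfl⟩⟩, by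
      show (g ^ (-i)) ((g ^ i) a) = a
      simp [← Equiv.Perm.mul_apply, ← zpow_add]⟩

lemma upper_bound : ∀ (m : ℕ) (g : Equiv.Perm α), g.support.card ≤ m →
    ∃ l : List (Equiv.Perm α), l.length = Fintype.card α - Nat.card (Qc g) ∧
      (∀ τ ∈ l, τ.IsSwap) ∧ l.prod = g := by
  intro m
  induction m with
  | zero =>
    intro g hg
    have : g = 1 := by
      rw [← Equiv.Perm.support_eq_empty_iff]
      exact Finset.card_eq_zero.mp (Nat.le_zero.mp hg)
    subst this
    exact ⟨[], by simp [Qc_one], by simp, rfl⟩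
  | succ m ih =>
    intro g hg
    by_cases h1 : g = 1
    · subst h1
      exact ⟨[], by simp [Qc_one], by simp, rfl⟩
    · obtain ⟨x, hx⟩ : ∃ x, g x ≠ x := by
        by_contra hc
        push_neg at hc
        exact h1 (Equiv.ext hc)
      set k := swap x (g x) * g with hk
      have hcard : k.support.card ≤ m := by
        have h2 := Equiv.Perm.card_support_swap_mul hx
        rw [← hk] at h2
        omega
      obtain ⟨l, hl, hsw, hprod⟩ := ih k hcard
      have hN : Nat.card (Qc k) = Nat.card (Qc g) + 1 := L2 hx
      have hle : Nat.card (Qc k) ≤ Fintype.card α := Qc_le k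
      refine ⟨swap x (g x) :: l, ?_, ?_, ?_⟩
      · simp only [List.length_cons, hl, hN]
        omega
      · intro τ hτ
        rcases List.mem_cons.mp hτ with h | h
        · exact h ▸ ⟨x, g x, Ne.symm hx, rfl⟩
        · exact hsw τ h
      · rw [List.prod_cons, hprod, hk, ← mul_assoc, swap_mul_self, one_mul]

lemma lower_bound (l : List (Equiv.Perm α)) (hsw : ∀ τ ∈ l, τ.IsSwap) :
    Fintype.card α - Nat.card (Qc l.prod) ≤ l.length := by
  induction l with
  | nil => simp [Qc_one]
  | cons τ l ih =>
    have hswl : ∀ σ ∈ l, σ.IsSwap := fun σ hσ => hsw σ (List.mem_cons_of_mem τ hσ)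
    obtain ⟨x, y, hxy, rfl⟩ := hsw τ List.mem_cons_self
    have h1 := L1 (x := x) (y := y) l.prod
    have h2 := ih hswl
    rw [List.prod_cons, List.length_cons]
    omega

end Aux

/-- `swapDist g` is the least number of transpositions whose product equals `g`. -/
noncomputable def swapDist {α : Type*} [Fintype α] [DecidableEq α] (g : Equiv.Perm α) : ℕ :=
  sInf {k | ∃ l : List (Equiv.Perm α), l.length = k ∧ (∀ τ ∈ l, τ.IsSwap) ∧ l.prod = g}

/-- `cycleCount g` is the number of orbits of the cyclic subgroup generated by `g`
(counting each fixed point as a 1-cycle). -/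
noncomputable def cycleCount {α : Type*} [Fintype α] [DecidableEq α] (g : Equiv.Perm α) : ℕ :=
  Nat.card (MulAction.orbitRel.Quotient (Subgroup.zpowers g) α)

theorem swapDist_eq_card_sub_cycleCount {α : Type*} [Fintype α] [DecidableEq α]
    (n : ℕ) (hn : Fintype.card α = n) (g : Equiv.Perm α) :
    swapDist g = n - cycleCount g := by
  subst hn
  have hcc : cycleCount g = Nat.card (Qc g) := cycleCount_eq_Qc g
  rw [swapDist, hcc]
  obtain ⟨l, hl, hsw, hprod⟩ := upper_bound g.support.card g le_rfl
  apply le_antisymm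
  · exact Nat.sInf_le ⟨l, hl, hsw, hprod⟩
  · refine le_csInf ⟨_, l, hl, hsw, hprod⟩ ?_
    rintro b ⟨l', hl', hsw', hprod'⟩
    rw [← hl', ← hprod']
    exact lower_bound l' hsw'
end

section
/- For every n ≥ 1, the sum over all permutations g in S_n of s(g), the least number of transpositions whose product is g, equals n! · (n - H_n); consequently, the average value of s(g) for a uniformly random permutation of n points is n - H_n. -/
set_option linter.unusedSectionVars false

open Equiv Equiv.Perm

namespace SwapDistAux

variable {α : Type*} [Fintype α] [DecidableEq α]

/-- The setoid whose classes are the cycles (orbits) of a permutation. -/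
def st (g : Perm α) : Setoid α :=
  ⟨g.SameCycle, ⟨SameCycle.refl g, SameCycle.symm, SameCycle.trans⟩⟩

/-- The number of orbits (cycles, including fixed points) of a permutation. -/
noncomputable def cyc (g : Perm α) : ℕ := Nat.card (Quotient (st g))

lemma cyc_def (g : Perm α) : cyc g = Nat.card (Quotient (st g)) := rfl

lemma st_one_rel (x y : α) : (st (1 : Perm α)).r x y ↔ x = y := sameCycle_one

lemma cyc_one : cyc (1 : Perm α) = Fintype.card α := by
  rw [cyc, ← Nat.card_eq_fintype_card]
  exact (Nat.card_eq_of_bijective (Quotient.mk (st 1))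
    ⟨fun x y h => sameCycle_one.mp (Quotient.exact h), Quotient.mk''_surjective⟩).symm

lemma cyc_le_card (g : Perm α) : cyc g ≤ Fintype.card α := by
  rw [cyc, ← Nat.card_eq_fintype_card]
  exact Nat.card_le_card_of_surjective _ (Quotient.mk''_surjective (s₁ := st g))

/-- The setoid `s` with the classes of `a` and `b` merged. -/
def rj (s : Setoid α) (a b : α) : Setoid α where
  r x y := s.r x y ∨ (s.r x a ∧ s.r b y) ∨ (s.r x b ∧ s.r a y)
  iseqv := by
    constructor
    · exact fun x => Or.inl (s.refl x)
    · rintro x y (h | ⟨h1, h2⟩ | ⟨h1, h2⟩)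
      · exact Or.inl (s.symm h)
      · exact Or.inr (Or.inr ⟨s.symm h2, s.symm h1⟩)
      · exact Or.inr (Or.inl ⟨s.symm h2, s.symm h1⟩)
    · rintro x y z (h | ⟨h1, h2⟩ | ⟨h1, h2⟩) (h' | ⟨h1', h2'⟩ | ⟨h1', h2'⟩)
      · exact Or.inl (s.trans h h')
      · exact Or.inr (Or.inl ⟨s.trans h h1', h2'⟩)
      · exact Or.inr (Or.inr ⟨s.trans h h1', h2'⟩)
      · exact Or.inr (Or.inl ⟨h1, s.trans h2 h'⟩)
      · exact Or.inr (Or.inl ⟨h1, h2'⟩)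
      · exact Or.inl (s.trans h1 h2')
      · exact Or.inr (Or.inr ⟨h1, s.trans h2 h'⟩)
      · exact Or.inl (s.trans h1 h2')
      · exact Or.inr (Or.inr ⟨h1, h2'⟩)

lemma rj_rel_of (s : Setoid α) (a b : α) {x y : α} (h : s.r x y) : (rj s a b).r x y := Or.inl h

lemma rj_self (s : Setoid α) (a b : α) (hab : s.r a b) : rj s a b = s := by
  apply Setoid.ext
  intro x y
  constructor
  · rintro (h | ⟨h1, h2⟩ | ⟨h1, h2⟩)
    · exact h
    · exact s.trans h1 (s.trans hab h2)
    · exact s.trans h1 (s.trans (s.symm hab) h2)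
  · exact Or.inl

/-- multiplying by a swap keeps you inside the merged-orbit relation. -/
lemma sameCycle_swap_mul_le (h : Perm α) (a b : α) {x y : α}
    (hxy : (Equiv.swap a b * h).SameCycle x y) : (rj (st h) a b).r x y := by
  set g := Equiv.swap a b * h with hg
  have step : ∀ w, (rj (st h) a b).r w (g w) := by
    intro w
    have hw : (st h).r w (h w) := ⟨1, by simp⟩
    by_cases h1 : h w = a
    · have : g w = b := by rw [hg]; simp [h1]
      rw [this]
      exact Or.inr (Or.inl ⟨h1 ▸ hw, (st h).refl _⟩)
    · by_cases h2 : h w = b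
      · have : g w = a := by rw [hg]; simp [h2]
        rw [this]
        exact Or.inr (Or.inr ⟨h2 ▸ hw, (st h).refl _⟩)
      · have : g w = h w := by
          rw [hg]; simp [Equiv.swap_apply_of_ne_of_ne h1 h2]
        rw [this]; exact Or.inl hw
  have stepinv : ∀ w, (rj (st h) a b).r w (g⁻¹ w) := by
    intro w
    have := step (g⁻¹ w)
    rw [← Equiv.Perm.mul_apply, mul_inv_cancel, Equiv.Perm.one_apply] at this
    exact (rj (st h) a b).symm this
  obtain ⟨i, hi⟩ := hxy
  subst hi
  induction i using Int.induction_on with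
  | zero => simpa using (rj (st h) a b).refl x
  | succ k ih =>
      have : (g ^ ((k : ℤ) + 1)) x = g ((g ^ (k : ℤ)) x) := by
        rw [add_comm, zpow_one_add]; rfl
      rw [this]
      exact (rj (st h) a b).trans ih (step _)
  | pred k ih =>
      have : (g ^ (-(k : ℤ) - 1)) x = g⁻¹ ((g ^ (-(k : ℤ))) x) := by
        rw [show (-(k : ℤ) - 1) = (-1) + (-(k : ℤ)) by ring, zpow_add, zpow_neg_one]; rfl
      rw [this]
      exact (rj (st h) a b).trans ih (stepinv _)


lemma quot_mk_eq_iff (s : Setoid α) (x y : α) :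
    Quotient.mk s x = Quotient.mk s y ↔ s.r x y :=
  ⟨Quotient.exact, Quotient.sound⟩

lemma card_quot_le_of_le {s t : Setoid α} (hst : ∀ x y, s.r x y → t.r x y) :
    Nat.card (Quotient t) ≤ Nat.card (Quotient s) := by
  have hsurj : Function.Surjective
      (Quotient.map' (s₁ := s) (s₂ := t) id (fun x y h => hst x y h)) := by
    intro q
    obtain ⟨x, rfl⟩ := Quotient.exists_rep q
    exact ⟨Quotient.mk s x, rfl⟩
  exact Nat.card_le_card_of_surjective _ hsurj

lemma card_quot_rj (s : Setoid α) (a b : α) (hab : ¬ s.r a b) :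
    Nat.card (Quotient (rj s a b)) + 1 = Nat.card (Quotient s) := by
  classical
  letI : Fintype (Quotient s) := Fintype.ofFinite _
  letI : Fintype (Quotient (rj s a b)) := Fintype.ofFinite _
  set B : Quotient s := Quotient.mk s b with hB
  have hrjle : ∀ x y, s.r x y → (rj s a b).r x y := fun x y h => Or.inl h
  set φ : Quotient s → Quotient (rj s a b) :=
    Quotient.map' (s₁ := s) (s₂ := rj s a b) id (fun x y h => hrjle x y h) with hφ
  have hφmk : ∀ x : α, φ (Quotient.mk s x) = Quotient.mk (rj s a b) x := fun _ => rfl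
  have hbij : Function.Bijective (fun q : {q : Quotient s // q ≠ B} => φ q.1) := by
    constructor
    · rintro ⟨q, hq⟩ ⟨q', hq'⟩ hqq'
      obtain ⟨x, rfl⟩ := Quotient.exists_rep q
      obtain ⟨y, rfl⟩ := Quotient.exists_rep q'
      simp only [hφmk] at hqq'
      have hr : (rj s a b).r x y := (quot_mk_eq_iff _ _ _).mp hqq'
      apply Subtype.ext
      rcases hr with h | ⟨h1, h2⟩ | ⟨h1, h2⟩
      · exact (quot_mk_eq_iff _ _ _).mpr h
      · exact absurd ((quot_mk_eq_iff s y b).mpr (s.symm h2)) hq'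
      · exact absurd ((quot_mk_eq_iff s x b).mpr h1) hq
    · intro q
      obtain ⟨x, rfl⟩ := Quotient.exists_rep q
      by_cases hxb : s.r x b
      · refine ⟨⟨Quotient.mk s a, ?_⟩, ?_⟩
        · simp only [hB, Ne, quot_mk_eq_iff]; exact hab
        · simp only [hφmk]
          exact (quot_mk_eq_iff (rj s a b) a x).mpr (Or.inr (Or.inl ⟨s.refl a, s.symm hxb⟩))
      · exact ⟨⟨Quotient.mk s x, by simp only [hB, Ne, quot_mk_eq_iff]; exact hxb⟩, rfl⟩
  have hcard := Nat.card_eq_of_bijective _ hbij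
  have h1 : Nat.card {q : Quotient s // q ≠ B} = Fintype.card (Quotient s) - 1 := by
    rw [Nat.card_eq_fintype_card]
    have := Fintype.card_subtype_compl (fun q : Quotient s => q = B)
    rw [Fintype.card_subtype_eq] at this
    exact this
  have h2 : 1 ≤ Fintype.card (Quotient s) := Fintype.card_pos_iff.mpr ⟨B⟩
  rw [hcard, Nat.card_eq_fintype_card] at h1
  rw [Nat.card_eq_fintype_card, Nat.card_eq_fintype_card]
  omega

lemma cyc_swap_mul_ge (h : Perm α) (a b : α) :
    cyc h ≤ cyc (Equiv.swap a b * h) + 1 := by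
  have hle : Nat.card (Quotient (rj (st h) a b)) ≤ cyc (Equiv.swap a b * h) :=
    card_quot_le_of_le (fun x y hxy => sameCycle_swap_mul_le h a b hxy)
  by_cases hab : (st h).r a b
  · rw [rj_self _ _ _ hab] at hle
    exact le_trans hle (Nat.le_succ _)
  · have := card_quot_rj (st h) a b hab
    simp only [cyc_def] at hle ⊢
    omega

lemma st_le_of (g h : Perm α) (a b : α) (hh : h = Equiv.swap a b * g)
    (hab : (st g).r a b) : ∀ x y, (st h).r x y → (st g).r x y := by
  intro x y hxy
  have := sameCycle_swap_mul_le g a b (hh ▸ hxy)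
  rwa [rj_self _ _ _ hab] at this

lemma st_eq_of (g h : Perm α) (a b : α) (hg : g = Equiv.swap a b * h)
    (hsub : ∀ x y, (st h).r x y → (st g).r x y) (hab' : (st g).r a b) :
    st g = rj (st h) a b := by
  apply Setoid.ext; intro x y
  constructor
  · intro hxy
    exact sameCycle_swap_mul_le h a b (hg ▸ hxy)
  · rintro (h1 | ⟨h1, h2⟩ | ⟨h1, h2⟩)
    · exact hsub _ _ h1
    · exact SameCycle.trans (hsub _ _ h1) (SameCycle.trans hab' (hsub _ _ h2))
    · exact SameCycle.trans (hsub _ _ h1) (SameCycle.trans (SameCycle.symm hab') (hsub _ _ h2))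

lemma not_st_of_fixed {h : Perm α} {a b : α} (ha : h a = a) (hab : b ≠ a) :
    ¬ (st h).r a b := by
  rintro ⟨i, hi⟩
  rw [zpow_apply_eq_self_of_apply_eq_self ha] at hi
  exact hab hi.symm

/-- Merging: attaching a fixed point `a` to any other point decreases orbit count by 1. -/
lemma cyc_swap_mul_fixed (h : Perm α) (a b : α) (ha : h a = a) (hab : b ≠ a) :
    cyc (Equiv.swap a b * h) + 1 = cyc h := by
  set g := Equiv.swap a b * h with hgdef
  have hgab : (st g).r a b := ⟨1, by simp [hgdef, ha]⟩
  have hh : h = Equiv.swap a b * g := by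
    rw [hgdef, ← mul_assoc, Equiv.swap_mul_self, one_mul]
  have hsub := st_le_of g h a b hh hgab
  have hst : st g = rj (st h) a b := st_eq_of g h a b hgdef hsub hgab
  have hnab := not_st_of_fixed ha hab
  have hcard := card_quot_rj (st h) a b hnab
  simp only [cyc_def]
  rw [hst]
  exact hcard

/-- Splitting: cutting the cycle of `x` at `x` increases orbit count by 1. -/
lemma cyc_swap_mul_apply (g : Perm α) (x : α) (hx : g x ≠ x) :
    cyc (Equiv.swap x (g x) * g) = cyc g + 1 := by
  set h := Equiv.swap x (g x) * g with hh
  have hg : g = Equiv.swap x (g x) * h := by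
    rw [hh, ← mul_assoc, Equiv.swap_mul_self, one_mul]
  have hgab : (st g).r x (g x) := ⟨1, by simp⟩
  have hsub := st_le_of g h x (g x) hh hgab
  have hst : st g = rj (st h) x (g x) := st_eq_of g h x (g x) hg hsub hgab
  have hfix : h x = x := by simp [hh]
  have hnab : ¬ (st h).r x (g x) := not_st_of_fixed hfix hx
  have hcard := card_quot_rj (st h) x (g x) hnab
  simp only [cyc_def]
  rw [hst]
  omega

lemma exists_swap_list (N : ℕ) : ∀ g : Perm α, g.support.card ≤ N →
    ∃ l : List (Perm α), (∀ τ ∈ l, τ.IsSwap) ∧ l.prod = g ∧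
      l.length + cyc g = Fintype.card α := by
  induction N with
  | zero =>
      intro g hg
      have hg1 : g = 1 := by
        rw [← support_eq_empty_iff]
        exact Finset.card_eq_zero.mp (Nat.le_zero.mp hg)
      subst hg1
      exact ⟨[], by simp, by simp, by simp [cyc_one]⟩
  | succ N ih =>
      intro g hg
      by_cases h1 : g = 1
      · subst h1
        exact ⟨[], by simp, by simp, by simp [cyc_one]⟩
      · obtain ⟨x, hx⟩ : ∃ x, g x ≠ x := by
          by_contra hc
          push_neg at hc
          exact h1 (Equiv.ext hc)
        set h := Equiv.swap x (g x) * g with hh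
        have hgx : x ∈ g.support := mem_support.mpr hx
        have hc : h.support.card < g.support.card := card_support_swap_mul hx
        obtain ⟨l, hl1, hl2, hl3⟩ := ih h (by omega)
        have hcyc : cyc h = cyc g + 1 := cyc_swap_mul_apply g x hx
        refine ⟨Equiv.swap x (g x) :: l, ?_, ?_, ?_⟩
        · intro τ hτ
          rcases List.mem_cons.mp hτ with rfl | ht
          · exact ⟨x, g x, Ne.symm hx, rfl⟩
          · exact hl1 τ ht
        · rw [List.prod_cons, hl2, hh, ← mul_assoc, Equiv.swap_mul_self, one_mul]
        · rw [List.length_cons]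
          omega

lemma card_le_swap_list (l : List (Perm α)) (hl : ∀ τ ∈ l, τ.IsSwap) :
    Fintype.card α ≤ l.length + cyc l.prod := by
  induction l with
  | nil => simp [cyc_one]
  | cons τ l ih =>
      obtain ⟨a, b, hab, rfl⟩ := hl τ List.mem_cons_self
      have h1 := ih (fun σ hσ => hl σ (List.mem_cons_of_mem _ hσ))
      have h2 := cyc_swap_mul_ge l.prod a b
      rw [List.prod_cons, List.length_cons]
      omega

lemma swapDist_set_nonempty (g : Perm α) :
    {k | ∃ l : List (Perm α), l.length = k ∧ (∀ τ ∈ l, τ.IsSwap) ∧ l.prod = g}.Nonempty := by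
  obtain ⟨l, hl1, hl2, _⟩ := exists_swap_list g.support.card g le_rfl
  exact ⟨l.length, l, rfl, hl1, hl2⟩

lemma swapDist_add_cyc (g : Perm α) : swapDist g + cyc g = Fintype.card α := by
  obtain ⟨l, hl1, hl2, hl3⟩ := exists_swap_list g.support.card g le_rfl
  have hub : swapDist g ≤ l.length := Nat.sInf_le ⟨l, rfl, hl1, hl2⟩
  obtain ⟨l', hlen, hsw, hprod⟩ := Nat.sInf_mem (swapDist_set_nonempty g)
  have hlow := card_le_swap_list l' hsw
  rw [hprod] at hlow
  have : l'.length = swapDist g := hlen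
  omega

lemma decFin_zero_apply_zero {m : ℕ} (e : Perm (Fin m)) :
    (Equiv.Perm.decomposeFin.symm (0, e)) 0 = 0 :=
  Equiv.Perm.decomposeFin_symm_apply_zero 0 e

lemma decFin_zero_apply_succ {m : ℕ} (e : Perm (Fin m)) (x : Fin m) :
    (Equiv.Perm.decomposeFin.symm (0, e)) x.succ = (e x).succ := by
  rw [Equiv.Perm.decomposeFin_symm_apply_succ, Equiv.swap_self]
  rfl

lemma decFin_zero_zpow_succ {m : ℕ} (e : Perm (Fin m)) (i : ℤ) (x : Fin m) :
    ((Equiv.Perm.decomposeFin.symm (0, e) : Perm (Fin (m + 1))) ^ i) x.succ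
      = ((e ^ i) x).succ := by
  set F : Perm (Fin (m + 1)) := Equiv.Perm.decomposeFin.symm (0, e) with hF
  have hnat : ∀ (n : ℕ) (x : Fin m), (F ^ n) x.succ = ((e ^ n) x).succ := by
    intro n
    induction n with
    | zero => intro x; simp
    | succ n ih =>
        intro x
        rw [pow_succ', pow_succ', Perm.mul_apply, Perm.mul_apply, ih,
          decFin_zero_apply_succ]
  obtain ⟨n, rfl | rfl⟩ := i.eq_nat_or_neg
  · rw [zpow_natCast, zpow_natCast, hnat]
  · rw [zpow_neg, zpow_neg, zpow_natCast, zpow_natCast]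
    apply (F ^ n).injective
    rw [← Perm.mul_apply, mul_inv_cancel, Perm.one_apply, hnat, ← Perm.mul_apply, mul_inv_cancel,
      Perm.one_apply]

/-- the quotient map used to count cycles of `decomposeFin.symm (0, e)`. -/
noncomputable def toOpt {m : ℕ} (e : Perm (Fin m)) (x : Fin (m + 1)) :
    Option (Quotient (st e)) :=
  Fin.cases none (fun x' => some (Quotient.mk (st e) x')) x

lemma toOpt_zero {m : ℕ} (e : Perm (Fin m)) : toOpt e 0 = none := rfl

lemma toOpt_succ {m : ℕ} (e : Perm (Fin m)) (x : Fin m) :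
    toOpt e x.succ = some (Quotient.mk (st e) x) := by
  simp [toOpt]

lemma cyc_decFin_zero {m : ℕ} (e : Perm (Fin m)) :
    cyc (Equiv.Perm.decomposeFin.symm (0, e)) = cyc e + 1 := by
  set F : Perm (Fin (m + 1)) := Equiv.Perm.decomposeFin.symm (0, e) with hF
  have hzero : ∀ i : ℤ, (F ^ i) 0 = 0 :=
    zpow_apply_eq_self_of_apply_eq_self (decFin_zero_apply_zero e)
  have hwd : ∀ x y : Fin (m + 1), (st F).r x y → toOpt e x = toOpt e y := by
    intro x y hxy
    obtain ⟨i, hi⟩ := hxy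
    induction x using Fin.cases with
    | zero => rw [hzero] at hi; subst hi; rfl
    | succ x' =>
        rw [hF, decFin_zero_zpow_succ] at hi
        subst hi
        rw [toOpt_succ, toOpt_succ]
        exact congrArg some (Quotient.sound ⟨i, rfl⟩)
  have hbij : Function.Bijective (Quotient.lift (toOpt e) hwd) := by
    constructor
    · intro q q'
      obtain ⟨x, rfl⟩ := Quotient.exists_rep q
      obtain ⟨y, rfl⟩ := Quotient.exists_rep q'
      induction x using Fin.cases with
      | zero =>
          induction y using Fin.cases with
          | zero => intro _; rfl
          | succ y' =>
              intro hq
              rw [Quotient.lift_mk, Quotient.lift_mk, toOpt_zero, toOpt_succ] at hq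
              exact absurd hq (by simp)
      | succ x' =>
          induction y using Fin.cases with
          | zero =>
              intro hq
              rw [Quotient.lift_mk, Quotient.lift_mk, toOpt_zero, toOpt_succ] at hq
              exact absurd hq (by simp)
          | succ y' =>
              intro hq
              rw [Quotient.lift_mk, Quotient.lift_mk, toOpt_succ, toOpt_succ] at hq
              obtain ⟨i, hi⟩ := Quotient.exact (Option.some_injective _ hq)
              exact Quotient.sound ⟨i, by rw [hF, decFin_zero_zpow_succ, hi]⟩
    · intro o
      match o with
      | none => exact ⟨Quotient.mk (st F) 0, rfl⟩
      | some q =>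
          obtain ⟨x, rfl⟩ := Quotient.exists_rep q
          exact ⟨Quotient.mk (st F) x.succ, by rw [Quotient.lift_mk, toOpt_succ]⟩
  have := Nat.card_eq_of_bijective _ hbij
  rw [cyc_def, cyc_def, this, Finite.card_option]

lemma cyc_decFin_of_ne {m : ℕ} (e : Perm (Fin m)) (p : Fin (m + 1)) (hp : p ≠ 0) :
    cyc (Equiv.Perm.decomposeFin.symm (p, e)) = cyc e := by
  have hdec : Equiv.Perm.decomposeFin.symm (p, e) =
      Equiv.swap 0 p * Equiv.Perm.decomposeFin.symm (0, e) := by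
    ext z
    induction z using Fin.cases with
    | zero =>
        rw [Perm.mul_apply, decFin_zero_apply_zero, Equiv.Perm.decomposeFin_symm_apply_zero,
          Equiv.swap_apply_left]
    | succ z' =>
        rw [Perm.mul_apply, decFin_zero_apply_succ, Equiv.Perm.decomposeFin_symm_apply_succ]
  have hkey := cyc_swap_mul_fixed (Equiv.Perm.decomposeFin.symm (0, e)) 0 p
    (decFin_zero_apply_zero e) hp
  rw [cyc_decFin_zero] at hkey
  rw [hdec]
  omega


noncomputable def Cs (m : ℕ) : ℕ := ∑ g : Perm (Fin m), cyc g

lemma Cs_zero : Cs 0 = 0 := by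
  rw [Cs]
  apply Finset.sum_eq_zero
  intro g _
  have := cyc_le_card g
  simpa using this

lemma Cs_succ (m : ℕ) : Cs (m + 1) = (m + 1) * Cs m + m.factorial := by
  rw [Cs, ← Equiv.sum_comp (Equiv.Perm.decomposeFin.symm :
    Fin (m + 1) × Perm (Fin m) ≃ Perm (Fin (m + 1))) (fun g => cyc g)]
  rw [Fintype.sum_prod_type_right]
  have hinner : ∀ e : Perm (Fin m),
      (∑ p : Fin (m + 1), cyc (Equiv.Perm.decomposeFin.symm (p, e)))
        = (m + 1) * cyc e + 1 := by
    intro e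
    have : ∀ p : Fin (m + 1), cyc (Equiv.Perm.decomposeFin.symm (p, e))
        = cyc e + (if p = 0 then 1 else 0) := by
      intro p
      by_cases hp : p = 0
      · subst hp; rw [cyc_decFin_zero, if_pos rfl]
      · rw [cyc_decFin_of_ne e p hp, if_neg hp, Nat.add_zero]
    simp only [this]
    rw [Finset.sum_add_distrib, Finset.sum_const, Finset.card_univ, Fintype.card_fin,
      Finset.sum_ite_eq' Finset.univ (0 : Fin (m + 1)) (fun _ => 1)]
    simp [mul_comm]
  simp only [hinner]
  rw [Finset.sum_add_distrib, Finset.sum_const, Finset.card_univ, Fintype.card_perm,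
    Fintype.card_fin, ← Finset.mul_sum, smul_eq_mul, mul_one, Finset.mul_sum]
  rw [Cs, Finset.mul_sum]

lemma Cs_rat : ∀ m : ℕ, (Cs m : ℚ) =
    (m.factorial : ℚ) * ∑ k ∈ Finset.range m, (1 : ℚ) / (k + 1) := by
  intro m
  induction m with
  | zero => simp [Cs_zero]
  | succ m ih =>
      rw [Cs_succ, Finset.sum_range_succ, Nat.factorial_succ]
      push_cast
      rw [ih]
      have h1 : ((m : ℚ) + 1) ≠ 0 := by positivity
      field_simp

lemma permCongr_mul {β : Type*} (φ : α ≃ β) (g h : Perm α) :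
    φ.permCongr (g * h) = φ.permCongr g * φ.permCongr h := by
  ext x
  simp [Perm.mul_apply]

lemma permCongr_one {β : Type*} (φ : α ≃ β) : φ.permCongr (1 : Perm α) = 1 := by
  ext x
  simp

lemma permCongr_swap {β : Type*} [DecidableEq β] (φ : α ≃ β) (a b : α) :
    φ.permCongr (Equiv.swap a b) = Equiv.swap (φ a) (φ b) := by
  ext x
  by_cases h1 : x = φ a
  · subst h1
    simp [Equiv.swap_apply_left]
  · by_cases h2 : x = φ b
    · subst h2
      simp [Equiv.swap_apply_right]
    · have ha : φ.symm x ≠ a := fun h => h1 (by rw [← h, φ.apply_symm_apply])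
      have hb : φ.symm x ≠ b := fun h => h2 (by rw [← h, φ.apply_symm_apply])
      simp [Equiv.swap_apply_of_ne_of_ne ha hb, Equiv.swap_apply_of_ne_of_ne h1 h2]

lemma permCongr_prod {β : Type*} (φ : α ≃ β) (l : List (Perm α)) :
    (l.map (fun τ => φ.permCongr τ)).prod = φ.permCongr l.prod := by
  induction l with
  | nil => simp [permCongr_one]
  | cons τ l ih => simp [List.prod_cons, permCongr_mul, ih]

lemma swapDist_permCongr_le {β : Type*} [Fintype β] [DecidableEq β] (φ : α ≃ β) (g : Perm α) :
    swapDist (φ.permCongr g) ≤ swapDist g := by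
  obtain ⟨l, hlen, hsw, hprod⟩ := Nat.sInf_mem (swapDist_set_nonempty g)
  apply Nat.sInf_le
  refine ⟨l.map (fun τ => φ.permCongr τ), by rw [List.length_map]; exact hlen, ?_, ?_⟩
  · intro τ hτ
    obtain ⟨σ, hσ, rfl⟩ := List.mem_map.mp hτ
    obtain ⟨a, b, hab, rfl⟩ := hsw σ hσ
    exact ⟨φ a, φ b, φ.injective.ne hab, permCongr_swap φ a b⟩
  · rw [permCongr_prod, hprod]

lemma swapDist_permCongr {β : Type*} [Fintype β] [DecidableEq β] (φ : α ≃ β) (g : Perm α) :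
    swapDist (φ.permCongr g) = swapDist g := by
  refine le_antisymm (swapDist_permCongr_le φ g) ?_
  have := swapDist_permCongr_le φ.symm (φ.permCongr g)
  have heq : φ.symm.permCongr (φ.permCongr g) = g := by
    ext x
    simp
  rwa [heq] at this

end SwapDistAux

/-- The total of the minimal numbers of transpositions over all permutations of `n` points
is `n! · (n - Hₙ)`; hence the average value of `s(g)` is `n - Hₙ`. -/
theorem sum_swapDist_eq_factorial_mul_sub_harmonic {α : Type*} [Fintype α] [DecidableEq α]
    (n : ℕ) (hn : Fintype.card α = n) (hpos : 1 ≤ n) :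
    (∑ g : Equiv.Perm α, (swapDist g : ℚ)) =
        (n.factorial : ℚ) * ((n : ℚ) - ∑ k ∈ Finset.range n, (1 : ℚ) / (k + 1)) ∧
      (∑ g : Equiv.Perm α, (swapDist g : ℚ)) / (n.factorial : ℚ) =
        (n : ℚ) - ∑ k ∈ Finset.range n, (1 : ℚ) / (k + 1) := by
  have hfac : (n.factorial : ℚ) ≠ 0 := by exact_mod_cast n.factorial_ne_zero
  let φ : α ≃ Fin n := Fintype.equivFinOfCardEq hn
  have h1 : (∑ g : Equiv.Perm α, (swapDist g : ℚ))
      = ∑ g : Equiv.Perm (Fin n), (swapDist g : ℚ) := by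
    rw [← Equiv.sum_comp (φ.permCongr) (fun g : Equiv.Perm (Fin n) => (swapDist g : ℚ))]
    apply Finset.sum_congr rfl
    intro g _
    rw [SwapDistAux.swapDist_permCongr]
  have key : (∑ g : Equiv.Perm (Fin n), (swapDist g : ℚ))
      = (n.factorial : ℚ) * ((n : ℚ) - ∑ k ∈ Finset.range n, (1 : ℚ) / (k + 1)) := by
    have h2 : ∀ g : Equiv.Perm (Fin n),
        (swapDist g : ℚ) = (n : ℚ) - (SwapDistAux.cyc g : ℚ) := by
      intro g
      have ha := SwapDistAux.swapDist_add_cyc g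
      rw [Fintype.card_fin] at ha
      have hb : ((swapDist g : ℚ) + (SwapDistAux.cyc g : ℚ)) = (n : ℚ) := by
        exact_mod_cast congrArg (fun t : ℕ => (t : ℚ)) ha
      linarith
    simp only [h2]
    rw [Finset.sum_sub_distrib, Finset.sum_const, Finset.card_univ, Fintype.card_perm,
      Fintype.card_fin, nsmul_eq_mul]
    have h3 : (∑ g : Equiv.Perm (Fin n), (SwapDistAux.cyc g : ℚ))
        = ((SwapDistAux.Cs n : ℕ) : ℚ) := by
      rw [SwapDistAux.Cs]
      push_cast
      rfl
    rw [h3, SwapDistAux.Cs_rat]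
    ring
  refine ⟨h1.trans key, ?_⟩
  rw [h1, key, mul_comm, mul_div_assoc, div_self hfac, mul_one]
end
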